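/- If every vertex of a simple graph has at most k neighbors, then the graph has a proper edge coloring using k + 1 colors. -/

import Mathlib

set_option linter.unusedSectionVars false

namespace VizingProof

variable {V : Type*} [Fintype V] {k : ℕ}

structure Good (G : SimpleGraph V) (c : V → V → Option (Fin (k+1))) : Prop where
  symm : ∀ u v, c u v = c v u
  adj : ∀ u v, c u v ≠ none → G.Adj u v
  proper : ∀ u v w, v ≠ w → c u v ≠ none → c u v ≠ c u w

lemma Good.none_diag {G : SimpleGraph V} {c : V → V → Option (Fin (k+1))}
    (hc : Good G c) (v : V) : c v v = none := by
  by_contra h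
  exact G.loopless.irrefl v (hc.adj v v h)

lemma Good.eq_of {G : SimpleGraph V} {c : V → V → Option (Fin (k+1))}
    (hc : Good G c) {u v w : V} (h : c u v = c u w) (hn : c u v ≠ none) : v = w := by
  by_contra hne
  exact hc.proper u v w hne hn h

lemma free_exists {G : SimpleGraph V} [DecidableRel G.Adj] {c : V → V → Option (Fin (k+1))}
    (hc : Good G c) (hdeg : ∀ v, G.degree v ≤ k) (v : V) :
    ∃ γ : Fin (k+1), ∀ w, c v w ≠ some γ := by
  classical
  by_contra h
  push_neg at h
  have hsub : (Finset.univ.image (fun γ : Fin (k+1) => (some γ : Option (Fin (k+1))))) ⊆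
      (G.neighborFinset v).image (fun w => c v w) := by
    intro o ho
    simp only [Finset.mem_image, Finset.mem_univ, true_and] at ho ⊢
    obtain ⟨γ, rfl⟩ := ho
    obtain ⟨w, hw⟩ := h γ
    refine ⟨w, ?_, hw⟩
    rw [SimpleGraph.mem_neighborFinset]
    exact hc.adj v w (by simp [hw])
  have h1 : k + 1 ≤ ((G.neighborFinset v).image (fun w => c v w)).card := by
    calc k + 1 = (Finset.univ.image
        (fun γ : Fin (k+1) => (some γ : Option (Fin (k+1))))).card := by
          rw [Finset.card_image_of_injective _ (Option.some_injective _)]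
          simp
      _ ≤ _ := Finset.card_le_card hsub
  have h2 : ((G.neighborFinset v).image (fun w => c v w)).card ≤ k := by
    calc ((G.neighborFinset v).image (fun w => c v w)).card
        ≤ (G.neighborFinset v).card := Finset.card_image_le
      _ = G.degree v := (G.card_neighborFinset_eq_degree v)
      _ ≤ k := hdeg v
  omega

/-- Rotating a fan `f 0, …, f i` around `x` and coloring the last edge `x–(f i)` with `γ`. -/
lemma rotate {G : SimpleGraph V} {c : V → V → Option (Fin (k+1))} (hc : Good G c)
    {x : V} {f : ℕ → V} {i : ℕ}
    (hinj : ∀ a b, a ≤ i → b ≤ i → f a = f b → a = b)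
    (hadj : ∀ h, h ≤ i → G.Adj x (f h))
    (hfan : ∀ h, h < i → c x (f (h+1)) ≠ none ∧ ∀ w, c (f h) w ≠ c x (f (h+1)))
    {γ : Fin (k+1)} (hγx : ∀ w, c x w ≠ some γ) (hγi : ∀ w, c (f i) w ≠ some γ) :
    ∃ c' : V → V → Option (Fin (k+1)), Good G c' ∧ (∀ u v, c u v ≠ none → c' u v ≠ none) ∧ c' x (f 0) ≠ none := by
  classical
  set d : V → Option (Fin (k+1)) := fun w =>
    if hw : ∃ h, h < i ∧ w = f h then c x (f (Classical.choose hw + 1))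
    else if w = f i then some γ else c x w with hd
  -- characterization of d
  have d_cases : ∀ w, (∃ h, h < i ∧ w = f h ∧ d w = c x (f (h+1))) ∨
      (w = f i ∧ d w = some γ) ∨ ((∀ h, h ≤ i → w ≠ f h) ∧ d w = c x w) := by
    intro w
    by_cases hw : ∃ h, h < i ∧ w = f h
    · left
      obtain ⟨hlt, heq⟩ := Classical.choose_spec hw
      exact ⟨Classical.choose hw, hlt, heq, by rw [hd]; simp only [hw, dif_pos]⟩
    · by_cases hwi : w = f i
      · right; left
        exact ⟨hwi, by show dite _ _ _ = _; rw [dif_neg hw, if_pos hwi]⟩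
      · right; right
        refine ⟨?_, by show dite _ _ _ = _; rw [dif_neg hw, if_neg hwi]⟩
        intro h hh heq
        rcases Nat.lt_or_ge h i with hlt | hge
        · exact hw ⟨h, hlt, heq⟩
        · exact hwi (by rw [heq]; congr 1; omega)
  have eq_cx : ∀ a b, c x a = c x b → c x a ≠ none → a = b := fun a b h hn => hc.eq_of h hn
  -- injectivity of d on colored values
  have d_inj : ∀ w₁ w₂, d w₁ ≠ none → d w₁ = d w₂ → w₁ = w₂ := by
    intro w₁ w₂ hn heq
    rcases d_cases w₁ with ⟨h₁, hl₁, he₁, hv₁⟩ | ⟨he₁, hv₁⟩ | ⟨he₁, hv₁⟩ <;>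
      rcases d_cases w₂ with ⟨h₂, hl₂, he₂, hv₂⟩ | ⟨he₂, hv₂⟩ | ⟨he₂, hv₂⟩
    · rw [hv₁] at hn
      have : f (h₁+1) = f (h₂+1) := eq_cx _ _ (by rw [← hv₁, ← hv₂, heq]) hn
      have : h₁ = h₂ := by
        have := hinj (h₁+1) (h₂+1) (by omega) (by omega) this; omega
      rw [he₁, he₂, this]
    · exact absurd (by rw [← hv₁, heq, hv₂]) (hγx (f (h₁+1)))
    · rw [hv₁] at hn
      have : f (h₁+1) = w₂ := eq_cx _ _ (by rw [← hv₁, ← hv₂, heq]) hn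
      exact absurd this.symm (he₂ (h₁+1) (by omega))
    · exact absurd (by rw [← hv₂, ← heq, hv₁]) (hγx (f (h₂+1)))
    · rw [he₁, he₂]
    · exact absurd (by rw [← hv₂, ← heq, hv₁]) (hγx w₂)
    · rw [hv₁] at hn
      have : w₁ = f (h₂+1) := eq_cx _ _ (by rw [← hv₁, ← hv₂, heq]) hn
      exact absurd this (he₁ (h₂+1) (by omega))
    · exact absurd (by rw [← hv₁, heq, hv₂]) (hγx w₁)
    · rw [hv₁] at hn
      exact eq_cx _ _ (by rw [← hv₁, ← hv₂, heq]) hn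
  have d_x : d x = none := by
    rcases d_cases x with ⟨h, hl, he, _⟩ | ⟨he, _⟩ | ⟨_, hv⟩
    · exact absurd he (hadj h (by omega)).ne
    · exact absurd he (hadj i le_rfl).ne
    · rw [hv]; exact hc.none_diag x
  have d_mono : ∀ v, c x v ≠ none → d v ≠ none := by
    intro v hv
    rcases d_cases v with ⟨h, hl, he, hv'⟩ | ⟨he, hv'⟩ | ⟨_, hv'⟩
    · rw [hv']; exact (hfan h hl).1
    · rw [hv']; simp
    · rwa [hv']
  have d_f0 : d (f 0) ≠ none := by
    rcases Nat.eq_zero_or_pos i with hi | hi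
    · rcases d_cases (f 0) with ⟨h, hl, he, hv'⟩ | ⟨_, hv'⟩ | ⟨he, _⟩
      · omega
      · rw [hv']; simp
      · exact absurd rfl (he 0 (by omega))
    · rcases d_cases (f 0) with ⟨h, hl, he, hv'⟩ | ⟨he, hv'⟩ | ⟨he, _⟩
      · rw [hv']; exact (hfan h hl).1
      · rw [hv']; simp
      · exact absurd rfl (he 0 (by omega))
  have d_B : ∀ v w, w ≠ x → d v ≠ none → c v w ≠ d v := by
    intro v w hw hn
    rcases d_cases v with ⟨h, hl, he, hv'⟩ | ⟨he, hv'⟩ | ⟨he, hv'⟩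
    · rw [hv', he]; exact (hfan h hl).2 w
    · rw [hv', he]; exact hγi w
    · rw [hv']
      intro heq
      have hcx : c v x ≠ none := by rw [hc.symm]; rw [hv'] at hn; exact hn
      exact hc.proper v x w (Ne.symm hw) hcx (by rw [hc.symm v x, ← heq])
  have d_adj : ∀ v, d v ≠ none → G.Adj x v := by
    intro v hn
    rcases d_cases v with ⟨h, hl, he, _⟩ | ⟨he, _⟩ | ⟨_, hv'⟩
    · rw [he]; exact hadj h (by omega)
    · rw [he]; exact hadj i le_rfl
    · exact hc.adj x v (by rw [← hv']; exact hn)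
  -- the new coloring
  refine ⟨fun u v => if u = x then d v else if v = x then d u else c u v, ⟨?_, ?_, ?_⟩, ?_, ?_⟩
  · -- symmetry
    intro u v
    by_cases hu : u = x <;> by_cases hv : v = x <;>
      simp [if_pos, if_neg, hu, hv, hc.symm u v]
  · -- adjacency
    intro u v h
    by_cases hu : u = x
    · simp only [if_pos hu] at h; rw [hu]; exact d_adj v h
    · by_cases hv : v = x
      · simp only [if_neg hu, if_pos hv] at h; rw [hv]; exact (d_adj u h).symm
      · simp only [if_neg hu, if_neg hv] at h; exact hc.adj u v h
  · -- properness
    intro u v w hvw hn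
    by_cases hu : u = x
    · simp only [if_pos hu] at hn ⊢
      exact fun heq => hvw (d_inj v w hn heq)
    · by_cases hv : v = x
      · have hw : w ≠ x := fun h => hvw (hv.trans h.symm)
        simp only [if_neg hu, if_pos hv, if_neg hw] at hn ⊢
        intro heq
        exact d_B u w hw hn heq.symm
      · by_cases hw : w = x
        · simp only [if_neg hu, if_neg hv, if_pos hw] at hn ⊢
          intro heq
          by_cases hdn : d u = none
          · exact hn (heq.trans hdn)
          · exact d_B u v hv hdn heq
        · simp only [if_neg hu, if_neg hv, if_neg hw] at hn ⊢
          exact hc.proper u v w hvw hn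
  · -- monotonicity
    intro u v h
    by_cases hu : u = x
    · simp only [if_pos hu]; rw [hu] at h; exact d_mono v h
    · by_cases hv : v = x
      · simp only [if_neg hu, if_pos hv]; rw [hv] at h
        exact d_mono u (by rw [hc.symm x u]; exact h)
      · simp only [if_neg hu, if_neg hv]; exact h
  · -- the edge x–(f 0) is colored
    show (if x = x then d (f 0) else if f 0 = x then d x else c x (f 0)) ≠ none
    rw [if_pos rfl]
    exact d_f0


/-- Swapping colors `α` and `β` on a set `S` of vertices closed under `α`/`β`-edges. -/
lemma flip {G : SimpleGraph V} {c : V → V → Option (Fin (k+1))} (hc : Good G c)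
    (α β : Fin (k+1)) (S : Set V)
    (hS : ∀ v w, v ∈ S → (c v w = some α ∨ c v w = some β) → w ∈ S) :
    ∃ cb : V → V → Option (Fin (k+1)), Good G cb ∧
      (∀ u v, c u v ≠ none → cb u v ≠ none) ∧
      (∀ u, u ∉ S → ∀ w, cb u w = c u w) ∧
      (∀ u, u ∈ S → (∀ w', c u w' ≠ some β) → ∀ w, cb u w ≠ some α) ∧
      (∀ δ : Fin (k+1), δ ≠ α → δ ≠ β → ∀ u w, cb u w = some δ ↔ c u w = some δ) := by
  classical
  set σ : Option (Fin (k+1)) → Option (Fin (k+1)) :=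
    fun o => Equiv.swap (some α) (some β) o with hσ
  have σσ : ∀ o, σ (σ o) = o := fun o => Equiv.swap_apply_self _ _ o
  have σ_none : ∀ o, σ o = none ↔ o = none := by
    intro o
    constructor
    · intro h
      have := congrArg σ h
      rw [σσ] at this
      rw [this, hσ]
      exact Equiv.swap_apply_of_ne_of_ne (by simp) (by simp)
    · intro h
      rw [h, hσ]
      exact Equiv.swap_apply_of_ne_of_ne (by simp) (by simp)
  have σ_fix : ∀ o, o ≠ some α → o ≠ some β → σ o = o := by
    intro o h1 h2
    rw [hσ]
    exact Equiv.swap_apply_of_ne_of_ne h1 h2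
  have σ_inj : ∀ o₁ o₂, σ o₁ = σ o₂ → o₁ = o₂ := by
    intro o₁ o₂ h
    have := congrArg σ h
    rwa [σσ, σσ] at this
  set cb : V → V → Option (Fin (k+1)) :=
    fun u v => if u ∈ S then σ (c u v) else c u v with hcb
  have cb_out : ∀ u, u ∉ S → ∀ w, cb u w = c u w := by
    intro u hu w
    rw [hcb]
    simp only [if_neg hu]
  have cb_in : ∀ u, u ∈ S → ∀ w, cb u w = σ (c u w) := by
    intro u hu w
    rw [hcb]
    simp only [if_pos hu]
  have cb_none : ∀ u w, cb u w = none ↔ c u w = none := by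
    intro u w
    by_cases hu : u ∈ S
    · rw [cb_in u hu w, σ_none]
    · rw [cb_out u hu w]
  refine ⟨cb, ⟨?_, ?_, ?_⟩, ?_, cb_out, ?_, ?_⟩
  · -- symmetry
    intro u v
    by_cases hu : u ∈ S <;> by_cases hv : v ∈ S
    · rw [cb_in u hu v, cb_in v hv u, hc.symm u v]
    · have hfix : c u v ≠ some α ∧ c u v ≠ some β := by
        constructor <;> exact fun h => hv (hS u v hu (by simp [h]))
      rw [cb_in u hu v, cb_out v hv u, σ_fix _ hfix.1 hfix.2, hc.symm u v]
    · have hfix : c v u ≠ some α ∧ c v u ≠ some β := by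
        constructor <;> exact fun h => hu (hS v u hv (by simp [h]))
      rw [cb_in v hv u, cb_out u hu v, σ_fix _ hfix.1 hfix.2, hc.symm u v]
    · rw [cb_out u hu v, cb_out v hv u, hc.symm u v]
  · -- adjacency
    intro u v h
    apply hc.adj u v
    intro h'
    exact h ((cb_none u v).mpr h')
  · -- properness
    intro u v w hvw hn
    have hcn : c u v ≠ none := fun h' => hn ((cb_none u v).mpr h')
    by_cases hu : u ∈ S
    · rw [cb_in u hu v, cb_in u hu w]
      intro h
      exact hc.proper u v w hvw hcn (σ_inj _ _ h)
    · rw [cb_out u hu v, cb_out u hu w]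
      exact hc.proper u v w hvw hcn
  · -- monotone
    intro u v h h'
    exact h ((cb_none u v).mp h')
  · -- α becomes free on S at β-free vertices
    intro u hu hfree w
    rw [cb_in u hu w]
    intro h
    have := congrArg σ h
    rw [σσ] at this
    have hβ : σ (some α) = some β := Equiv.swap_apply_left _ _
    rw [hβ] at this
    exact hfree w this
  · -- other colors untouched
    intro δ hδα hδβ u w
    by_cases hu : u ∈ S
    · rw [cb_in u hu w]
      constructor
      · intro h
        have := congrArg σ h
        rw [σσ, σ_fix (some δ) (by simpa using hδα) (by simpa using hδβ)] at this
        exact this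
      · intro h
        rw [h]
        exact σ_fix (some δ) (by simpa using hδα) (by simpa using hδβ)
    · rw [cb_out u hu w]


section Paths

variable {W : Type*} {H : SimpleGraph W}

/-- A walk between distinct endpoints starts with an edge into its support. -/
lemma first_step {a b : W} (p : H.Walk a b) (hab : a ≠ b) :
    ∃ s, H.Adj a s ∧ s ∈ p.support := by
  cases p with
  | nil => exact absurd rfl hab
  | cons h q =>
    refine ⟨_, h, ?_⟩
    rw [SimpleGraph.Walk.support_cons]
    exact List.mem_cons_of_mem _ q.start_mem_support

/-- An interior vertex of a path has two distinct neighbors on the path. -/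
lemma interior_two {a b : W} (p : H.Walk a b) (hp : p.IsPath) :
    ∀ u ∈ p.support, u ≠ a → u ≠ b →
      ∃ s t, s ≠ t ∧ H.Adj u s ∧ H.Adj u t ∧ s ∈ p.support ∧ t ∈ p.support := by
  induction p with
  | nil =>
    intro u hu hua _
    rw [SimpleGraph.Walk.mem_support_nil_iff] at hu
    exact absurd hu hua
  | @cons a a₁ b h q ih =>
    intro u hu hua hub
    rw [SimpleGraph.Walk.support_cons, List.mem_cons] at hu
    rcases hu with rfl | hu
    · exact absurd rfl hua
    by_cases hu1 : u = a₁
    · subst hu1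
      cases q with
      | nil => exact absurd rfl hub
      | @cons _ a₂ _ h₂ q₂ =>
        refine ⟨a, a₂, ?_, h.symm, h₂, ?_, ?_⟩
        · intro haa
          have hnotin := (SimpleGraph.Walk.cons_isPath_iff h _).mp hp |>.2
          apply hnotin
          rw [haa, SimpleGraph.Walk.support_cons]
          exact List.mem_cons_of_mem _ q₂.start_mem_support
        · rw [SimpleGraph.Walk.support_cons]
          exact List.mem_cons_self
        · rw [SimpleGraph.Walk.support_cons, SimpleGraph.Walk.support_cons]
          exact List.mem_cons_of_mem _ (List.mem_cons_of_mem _ q₂.start_mem_support)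
    · obtain ⟨s, t, hst, hs, ht, hsp, htp⟩ :=
        ih ((SimpleGraph.Walk.cons_isPath_iff h _).mp hp).1 u hu hu1 hub
      refine ⟨s, t, hst, hs, ht, ?_, ?_⟩ <;> rw [SimpleGraph.Walk.support_cons]
      · exact List.mem_cons_of_mem _ hsp
      · exact List.mem_cons_of_mem _ htp

/-- In a graph with max degree ≤ 2, three distinct vertices of degree ≤ 1
cannot be pairwise connected. -/
lemma three_deg_one {x a b : W}
    (hdeg2 : ∀ v w₁ w₂ w₃, H.Adj v w₁ → H.Adj v w₂ → H.Adj v w₃ →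
      w₁ = w₂ ∨ w₁ = w₃ ∨ w₂ = w₃)
    (h1 : ∀ w₁ w₂, H.Adj x w₁ → H.Adj x w₂ → w₁ = w₂)
    (ha : ∀ w₁ w₂, H.Adj a w₁ → H.Adj a w₂ → w₁ = w₂)
    (hb : ∀ w₁ w₂, H.Adj b w₁ → H.Adj b w₂ → w₁ = w₂)
    (hxa : x ≠ a) (hxb : x ≠ b) (hab : a ≠ b)
    (hra : H.Reachable a x) (hrb : H.Reachable b x) : False := by
  classical
  have hrab : H.Reachable a b := hra.trans hrb.symm
  obtain ⟨w⟩ := hrab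
  set p : H.Path a b := w.toPath with hp
  set T : Set W := {u | u ∈ (p : H.Walk a b).support} with hT
  have haT : a ∈ T := (p : H.Walk a b).start_mem_support
  have hclosed : ∀ u ∈ T, ∀ z, H.Adj u z → z ∈ T := by
    intro u hu z hz
    by_cases hua : u = a
    · subst hua
      obtain ⟨s, hs, hsp⟩ := first_step (p : H.Walk u b) hab
      rw [ha z s hz hs]
      exact hsp
    · by_cases hub : u = b
      · subst hub
        obtain ⟨s, hs, hsp⟩ := first_step ((p : H.Walk a u).reverse) hab.symm
        rw [hb z s hz hs]
        rw [SimpleGraph.Walk.support_reverse] at hsp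
        exact List.mem_reverse.mp hsp
      · obtain ⟨s, t, hst, hs, ht, hsp, htp⟩ :=
          interior_two (p : H.Walk a b) p.2 u hu hua hub
        rcases hdeg2 u z s t hz hs ht with h | h | h
        · rw [h]; exact hsp
        · rw [h]; exact htp
        · exact absurd h hst
  have hwalk : ∀ u ∈ T, ∀ z, ∀ _ : H.Walk u z, z ∈ T := by
    intro u hu z q
    induction q with
    | nil => exact hu
    | @cons u u₁ z h q ih => exact ih (hclosed u hu u₁ h)
  have hxT : x ∈ T := by
    obtain ⟨q⟩ := hra
    exact hwalk a haT x q
  obtain ⟨s, t, hst, hs, ht, _, _⟩ := interior_two (p : H.Walk a b) p.2 x hxT hxa hxb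
  exact hst (h1 s t hs ht)

end Paths


/-- The key extension step: an uncolored edge can be colored after recoloring. -/
lemma extend {G : SimpleGraph V} [DecidableRel G.Adj] {c : V → V → Option (Fin (k+1))}
    (hdeg : ∀ v, G.degree v ≤ k) (hc : Good G c) {x y₀ : V}
    (hxy : G.Adj x y₀) (hnone : c x y₀ = none) :
    ∃ c' : V → V → Option (Fin (k+1)), Good G c' ∧
      (∀ u v, c u v ≠ none → c' u v ≠ none) ∧ c' x y₀ ≠ none := by
  classical
  set P : ℕ → Prop := fun m => ∃ f : ℕ → V, f 0 = y₀ ∧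
      (∀ a b, a ≤ m → b ≤ m → f a = f b → a = b) ∧
      (∀ h, h ≤ m → G.Adj x (f h)) ∧
      (∀ h, h < m → c x (f (h+1)) ≠ none ∧ ∀ w, c (f h) w ≠ c x (f (h+1))) with hP
  have hP0 : P 0 := ⟨fun _ => y₀, rfl, fun a b ha hb _ => by omega,
    fun h _ => hxy, fun h hh => absurd hh (Nat.not_lt_zero h)⟩
  have hbound : ∀ m, P m → m < Fintype.card V := by
    rintro m ⟨f, -, hinj, -, -⟩
    have hinj' : Function.Injective (fun t : Fin (m+1) => f t) := by
      intro a b hab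
      exact Fin.ext (hinj a b (Nat.le_of_lt_succ a.isLt) (Nat.le_of_lt_succ b.isLt) hab)
    have := Fintype.card_le_of_injective _ hinj'
    rw [Fintype.card_fin] at this
    omega
  set M : ℕ := Nat.findGreatest P (Fintype.card V) with hM
  have hPM : P M := Nat.findGreatest_spec (Nat.zero_le _) hP0
  obtain ⟨f, hf0, hinj, hadj, hfan⟩ := hPM
  obtain ⟨α, hαx⟩ := free_exists hc hdeg x
  obtain ⟨β, hβM⟩ := free_exists hc hdeg (f M)
  by_cases hβx : ∀ w, c x w ≠ some β
  · obtain ⟨c', hg, hm, hne⟩ := rotate hc hinj hadj hfan hβx hβM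
    exact ⟨c', hg, hm, by rwa [hf0] at hne⟩
  push_neg at hβx
  obtain ⟨z, hz⟩ := hβx
  have hjex : ∃ j, j < M ∧ f (j+1) = z := by
    by_contra hcon
    push_neg at hcon
    have hzf : ∀ h, h ≤ M → z ≠ f h := by
      intro h hh heq
      rcases Nat.eq_zero_or_pos h with rfl | hpos
      · rw [heq, hf0, hnone] at hz
        cases hz
      · obtain ⟨h', rfl⟩ := Nat.exists_eq_succ_of_ne_zero (by omega : h ≠ 0)
        exact hcon h' (by omega) heq.symm
    have hP' : P (M+1) := by
      refine ⟨fun t => if t = M+1 then z else f t, ?_, ?_, ?_, ?_⟩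
      · simp only [if_neg (by omega : (0:ℕ) ≠ M+1)]
        exact hf0
      · intro a b ha hb heq
        by_cases haM : a = M+1 <;> by_cases hbM : b = M+1
        · omega
        · simp only [if_pos haM, if_neg hbM] at heq
          exact absurd heq (hzf b (by omega))
        · simp only [if_neg haM, if_pos hbM] at heq
          exact absurd heq.symm (hzf a (by omega))
        · simp only [if_neg haM, if_neg hbM] at heq
          exact hinj a b (by omega) (by omega) heq
      · intro h hh
        by_cases hhM : h = M+1
        · simp only [if_pos hhM]
          exact hc.adj x z (by rw [hz]; simp)
        · simp only [if_neg hhM]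
          exact hadj h (by omega)
      · intro h hh
        by_cases hhM : h = M
        · have h1 : h + 1 = M + 1 := by omega
          simp only [if_pos h1, if_neg (by omega : h ≠ M+1)]
          constructor
          · rw [hz]; simp
          · rw [hz, hhM]; exact hβM
        · simp only [if_neg (by omega : h + 1 ≠ M+1), if_neg (by omega : h ≠ M+1)]
          exact hfan h (by omega)
    exact Nat.findGreatest_is_greatest (by omega) (le_of_lt (hbound _ hP')) hP'
  obtain ⟨j, hj, hfj⟩ := hjex
  have hβfan : c x (f (j+1)) = some β := by rw [hfj]; exact hz
  have hβj : ∀ w, c (f j) w ≠ some β := by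
    intro w
    have := (hfan j hj).2 w
    rwa [hβfan] at this
  have eqcol : ∀ v a b', c v a = c v b' → c v a ≠ none → a = b' :=
    fun v a b' h hn => hc.eq_of h hn
  set H : SimpleGraph V :=
    { Adj := fun u v => u ≠ v ∧ (c u v = some α ∨ c u v = some β),
      symm := by
        constructor; intro u v h
        exact ⟨h.1.symm, by rw [hc.symm v u]; exact h.2⟩,
      loopless := by constructor; intro v h; exact h.1 rfl } with hHdef
  have hHadj : ∀ u v, H.Adj u v ↔ (u ≠ v ∧ (c u v = some α ∨ c u v = some β)) :=
    fun u v => Iff.rfl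
  have hclose : ∀ (r : V), ∀ v w, v ∈ {u | H.Reachable r u} →
      (c v w = some α ∨ c v w = some β) → w ∈ {u | H.Reachable r u} := by
    intro r v w hv hcw
    have hvw : v ≠ w := by
      intro h
      rw [h] at hcw
      rcases hcw with h' | h' <;> rw [hc.none_diag w] at h' <;> cases h'
    exact hv.trans ((hHadj v w).mpr ⟨hvw, hcw⟩).reachable
  have hdeg2 : ∀ v w₁ w₂ w₃, H.Adj v w₁ → H.Adj v w₂ → H.Adj v w₃ →
      w₁ = w₂ ∨ w₁ = w₃ ∨ w₂ = w₃ := by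
    intro v w₁ w₂ w₃ h₁ h₂ h₃
    rcases ((hHadj v w₁).mp h₁).2 with e1 | e1 <;>
      rcases ((hHadj v w₂).mp h₂).2 with e2 | e2 <;>
      rcases ((hHadj v w₃).mp h₃).2 with e3 | e3 <;>
      first
        | exact Or.inl (eqcol v w₁ w₂ (e1.trans e2.symm) (by rw [e1]; simp))
        | exact Or.inr (Or.inl (eqcol v w₁ w₃ (e1.trans e3.symm) (by rw [e1]; simp)))
        | exact Or.inr (Or.inr (eqcol v w₂ w₃ (e2.trans e3.symm) (by rw [e2]; simp)))
  have hdeg1α : ∀ v, (∀ w, c v w ≠ some α) → ∀ w₁ w₂, H.Adj v w₁ → H.Adj v w₂ → w₁ = w₂ := by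
    intro v hfree w₁ w₂ h₁ h₂
    rcases ((hHadj v w₁).mp h₁).2 with e1 | e1
    · exact absurd e1 (hfree w₁)
    · rcases ((hHadj v w₂).mp h₂).2 with e2 | e2
      · exact absurd e2 (hfree w₂)
      · exact eqcol v w₁ w₂ (e1.trans e2.symm) (by rw [e1]; simp)
  have hdeg1β : ∀ v, (∀ w, c v w ≠ some β) → ∀ w₁ w₂, H.Adj v w₁ → H.Adj v w₂ → w₁ = w₂ := by
    intro v hfree w₁ w₂ h₁ h₂
    rcases ((hHadj v w₁).mp h₁).2 with e1 | e1
    · rcases ((hHadj v w₂).mp h₂).2 with e2 | e2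
      · exact eqcol v w₁ w₂ (e1.trans e2.symm) (by rw [e1]; simp)
      · exact absurd e2 (hfree w₂)
    · exact absurd e1 (hfree w₁)
  have hxfj : x ≠ f j := (hadj j (le_of_lt hj)).ne
  have hxfM : x ≠ f M := (hadj M le_rfl).ne
  have hfjfM : f j ≠ f M := fun e => (Nat.ne_of_lt hj) (hinj j M (le_of_lt hj) le_rfl e)
  by_cases hreach : H.Reachable (f j) x
  · -- flip the component of f M; x and f j are not in it; rotate the whole fan
    have hxS : ¬ H.Reachable (f M) x := by
      intro h
      exact three_deg_one hdeg2 (hdeg1α x hαx) (hdeg1β (f j) hβj) (hdeg1β (f M) hβM)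
        hxfj hxfM hfjfM hreach h
    obtain ⟨cb, hgb, hmb, hout, hfreeb, hother⟩ :=
      flip hc α β {u | H.Reachable (f M) u} (hclose (f M))
    have hfjnS : f j ∉ {u | H.Reachable (f M) u} := fun h => hxS (h.trans hreach)
    have hxrow : ∀ w, cb x w = c x w := hout x hxS
    have hβxb : ∀ w, cb x w ≠ some α := by intro w; rw [hxrow w]; exact hαx w
    have hγM : ∀ w, cb (f M) w ≠ some α :=
      hfreeb (f M) (SimpleGraph.Reachable.refl _) hβM
    have hfanb : ∀ h, h < M → cb x (f (h+1)) ≠ none ∧ ∀ w, cb (f h) w ≠ cb x (f (h+1)) := by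
      intro h hh
      rw [hxrow]
      refine ⟨(hfan h hh).1, ?_⟩
      by_cases hhj : h = j
      · intro w heq
        rw [hout (f h) (by rw [hhj]; exact hfjnS) w] at heq
        exact (hfan h hh).2 w heq
      · obtain ⟨δ, hδ⟩ := Option.ne_none_iff_exists'.mp (hfan h hh).1
        have hδα : δ ≠ α := fun e => hαx (f (h+1)) (by rw [hδ, e])
        have hδβ : δ ≠ β := by
          intro e
          apply hhj
          have he : f (h+1) = f (j+1) := eqcol x _ _ (by rw [hδ, hβfan, e]) (by rw [hδ]; simp)
          have := hinj (h+1) (j+1) (by omega) (by omega) he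
          omega
        intro w heq
        rw [hδ] at heq
        exact ((hfan h hh).2 w) (by rw [hδ]; exact (hother δ hδα hδβ (f h) w).mp heq)
    obtain ⟨c', hg', hm', hne'⟩ := rotate hgb hinj hadj hfanb hβxb hγM
    exact ⟨c', hg', fun u v h => hm' u v (hmb u v h), by rwa [hf0] at hne'⟩
  · -- flip the component of f j; x is not in it; rotate the fan up to j
    obtain ⟨cb, hgb, hmb, hout, hfreeb, hother⟩ :=
      flip hc α β {u | H.Reachable (f j) u} (hclose (f j))
    have hxrow : ∀ w, cb x w = c x w := hout x hreach
    have hβxb : ∀ w, cb x w ≠ some α := by intro w; rw [hxrow w]; exact hαx w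
    have hγj : ∀ w, cb (f j) w ≠ some α :=
      hfreeb (f j) (SimpleGraph.Reachable.refl _) hβj
    have hinj' : ∀ a b, a ≤ j → b ≤ j → f a = f b → a = b :=
      fun a b ha hb => hinj a b (by omega) (by omega)
    have hadj' : ∀ h, h ≤ j → G.Adj x (f h) := fun h hh => hadj h (by omega)
    have hfanb : ∀ h, h < j → cb x (f (h+1)) ≠ none ∧ ∀ w, cb (f h) w ≠ cb x (f (h+1)) := by
      intro h hh
      have hhM : h < M := by omega
      rw [hxrow]
      refine ⟨(hfan h hhM).1, ?_⟩
      obtain ⟨δ, hδ⟩ := Option.ne_none_iff_exists'.mp (hfan h hhM).1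
      have hδα : δ ≠ α := fun e => hαx (f (h+1)) (by rw [hδ, e])
      have hδβ : δ ≠ β := by
        intro e
        have he : f (h+1) = f (j+1) := eqcol x _ _ (by rw [hδ, hβfan, e]) (by rw [hδ]; simp)
        have := hinj (h+1) (j+1) (by omega) (by omega) he
        omega
      intro w heq
      rw [hδ] at heq
      exact ((hfan h hhM).2 w) (by rw [hδ]; exact (hother δ hδα hδβ (f h) w).mp heq)
    obtain ⟨c', hg', hm', hne'⟩ := rotate hgb hinj' hadj' hfanb hβxb hγj
    exact ⟨c', hg', fun u v h => hm' u v (hmb u v h), by rwa [hf0] at hne'⟩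


/-- Every bounded-degree graph has a total good coloring. -/
lemma total {G : SimpleGraph V} [DecidableRel G.Adj]
    (hdeg : ∀ v, G.degree v ≤ k) :
    ∃ c : V → V → Option (Fin (k+1)), Good G c ∧ ∀ u v, G.Adj u v → c u v ≠ none := by
  classical
  have key : ∀ n : ℕ, ∀ c : V → V → Option (Fin (k+1)), Good G c →
      ((Finset.univ : Finset (V × V)).filter
        (fun p => G.Adj p.1 p.2 ∧ c p.1 p.2 = none)).card ≤ n →
      ∃ c' : V → V → Option (Fin (k+1)), Good G c' ∧ ∀ u v, G.Adj u v → c' u v ≠ none := by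
    intro n
    induction n with
    | zero =>
      intro c hc hcard
      refine ⟨c, hc, fun u v huv hnone => ?_⟩
      have : (u, v) ∈ (Finset.univ : Finset (V × V)).filter
          (fun p => G.Adj p.1 p.2 ∧ c p.1 p.2 = none) := by
        simp [huv, hnone]
      rw [Finset.card_eq_zero.mp (Nat.le_zero.mp hcard)] at this
      exact absurd this (Finset.notMem_empty _)
    | succ n ih =>
      intro c hc hcard
      by_cases hall : ∀ u v, G.Adj u v → c u v ≠ none
      · exact ⟨c, hc, hall⟩
      · push_neg at hall
        obtain ⟨x, y, hxy, hnone'⟩ := hall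
        obtain ⟨c', hc', hmono, hcol⟩ := extend hdeg hc hxy hnone'
        apply ih c' hc'
        have hssub : (Finset.univ : Finset (V × V)).filter
            (fun p => G.Adj p.1 p.2 ∧ c' p.1 p.2 = none) ⊂
            (Finset.univ : Finset (V × V)).filter
            (fun p => G.Adj p.1 p.2 ∧ c p.1 p.2 = none) := by
          constructor
          · intro p hp
            simp only [Finset.mem_filter, Finset.mem_univ, true_and] at hp ⊢
            refine ⟨hp.1, ?_⟩
            by_contra h
            exact hmono p.1 p.2 h hp.2
          · intro hsub
            have : (x, y) ∈ (Finset.univ : Finset (V × V)).filter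
                (fun p => G.Adj p.1 p.2 ∧ c' p.1 p.2 = none) := by
              apply hsub
              simp [hxy, hnone']
            simp only [Finset.mem_filter, Finset.mem_univ, true_and] at this
            exact hcol this.2
        have := Finset.card_lt_card hssub
        omega
  have hG : Good G (fun _ _ => (none : Option (Fin (k+1)))) := by
    refine ⟨fun u v => rfl, fun u v h => absurd rfl h, fun u v w hvw h => absurd rfl h⟩
  exact key _ _ hG le_rfl

end VizingProof

/-- A proper edge coloring of a simple graph: distinct edges sharing an endpoint
get different colors. -/
def IsProperEdgeColoring {V α : Type*} (G : SimpleGraph V) (c : G.edgeSet → α) : Prop :=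
  ∀ e₁ e₂ : G.edgeSet, e₁ ≠ e₂ →
    (∃ v, v ∈ (e₁ : Sym2 V) ∧ v ∈ (e₂ : Sym2 V)) → c e₁ ≠ c e₂

/-- Vizing's theorem: a simple graph with all degrees at most `k`
has a proper edge coloring with `k + 1` colors. -/
theorem vizing_edge_coloring {V : Type*} [Fintype V] (G : SimpleGraph V)
    [DecidableRel G.Adj] {k : ℕ}
    (hdeg : ∀ v, G.degree v ≤ k) :
    ∃ c : G.edgeSet → Fin (k + 1), IsProperEdgeColoring G c := by
  classical
  obtain ⟨ct, hct, htot⟩ := VizingProof.total hdeg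
  set F : Sym2 V → Option (Fin (k+1)) :=
    Sym2.lift ⟨fun u v => ct u v, fun u v => hct.symm u v⟩ with hF
  have hFs : ∀ u v, F (s(u, v)) = ct u v := fun u v => rfl
  have he : ∀ e : G.edgeSet, ∃ γ, F (e : Sym2 V) = some γ := by
    rintro ⟨e, hmem⟩
    induction e using Sym2.ind with
    | _ u v =>
      rw [SimpleGraph.mem_edgeSet] at hmem
      have := htot u v hmem
      rcases hF' : ct u v with _ | γ
      · exact absurd hF' this
      · exact ⟨γ, by rw [hFs]; exact hF'⟩
  refine ⟨fun e => Classical.choose (he e), ?_⟩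
  intro e₁ e₂ hne ⟨v, hv1, hv2⟩ heq
  obtain ⟨b₁, hb₁⟩ := (Sym2.mem_iff_exists).mp hv1
  obtain ⟨b₂, hb₂⟩ := (Sym2.mem_iff_exists).mp hv2
  have hbne : b₁ ≠ b₂ := by
    intro h
    apply hne
    apply Subtype.ext
    rw [hb₁, hb₂, h]
  have hc1 : ct v b₁ = some (Classical.choose (he e₁)) := by
    rw [← hFs, ← hb₁]
    exact Classical.choose_spec (he e₁)
  have hc2 : ct v b₂ = some (Classical.choose (he e₂)) := by
    rw [← hFs, ← hb₂]
    exact Classical.choose_spec (he e₂)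
  have heq' : Classical.choose (he e₁) = Classical.choose (he e₂) := heq
  apply hct.proper v b₁ b₂ hbne (by rw [hc1]; simp)
  rw [hc1, hc2, heq']
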